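/- (Proposition 5 (iii), Appendix A.1: the optimal assessment is interior) For every β ≥ 0, the problem max_{h ∈ [0,1]} v_E(a(h,β), β) − κ(h) admits at least one maximizer. If β = 0, then h = 0 is the unique maximizer. If β > 0, then every maximizer lies in the open interval (0,1). -/

import Mathlib

open Set Filter

set_option maxHeartbeats 2000000 in
theorem stmt_14
    -- effort cost c with first and second derivatives c', c'' on [0,∞)
    (c c' c'' : ℝ → ℝ)
    (hc' : ∀ a ∈ Ici (0:ℝ), HasDerivWithinAt c (c' a) (Ici 0) a)
    (hc'' : ∀ a ∈ Ici (0:ℝ), HasDerivWithinAt c' (c'' a) (Ici 0) a)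
    (hc''cont : ContinuousOn c'' (Ici 0))
    (hc'0 : c' 0 = 0)
    (hc''pos : ∀ a ∈ Ici (0:ℝ), 0 < c'' a)
    (hc'top : Tendsto c' atTop atTop)
    -- effect of effort r with partial derivatives ra (in a), raa, rab
    (r ra raa rab : ℝ → ℝ → ℝ)
    (hra : ∀ β ∈ Ici (0:ℝ), ∀ a ∈ Ici (0:ℝ),
      HasDerivWithinAt (fun x => r x β) (ra a β) (Ici 0) a)
    (hraa : ∀ β ∈ Ici (0:ℝ), ∀ a ∈ Ici (0:ℝ),
      HasDerivWithinAt (fun x => ra x β) (raa a β) (Ici 0) a)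
    (hrab : ∀ a ∈ Ici (0:ℝ), ∀ β ∈ Ici (0:ℝ),
      HasDerivWithinAt (fun y => ra a y) (rab a β) (Ici 0) β)
    (hr0 : ∀ β ∈ Ici (0:ℝ), r 0 β = 0)
    (hr0' : ∀ a ∈ Ici (0:ℝ), r a 0 = 0)
    (hraanp : ∀ a ∈ Ici (0:ℝ), ∀ β ∈ Ici (0:ℝ), raa a β ≤ 0)
    (hra0 : ∀ β > (0:ℝ), 0 < ra 0 β)
    (hrabpos : ∀ a ∈ Ici (0:ℝ), ∀ β > (0:ℝ), 0 < rab a β)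
    (hralim : ∀ β > (0:ℝ), Tendsto (fun a => ra a β / c' a) atTop (nhds 0))
    -- A h β is the unique maximizer over [0,∞) of a ↦ h·r(a,β) − c(a)
    (A : ℝ → ℝ → ℝ)
    (hA : ∀ h ∈ Icc (0:ℝ) 1, ∀ β ∈ Ici (0:ℝ),
      A h β ∈ Ici (0:ℝ) ∧
      IsMaxOn (fun x => h * r x β - c x) (Ici 0) (A h β) ∧
      ∀ x ∈ Ici (0:ℝ), IsMaxOn (fun y => h * r y β - c y) (Ici 0) x → x = A h β)
    -- assessment cost κ : continuous on [0,1], C¹ on [0,1), strictly increasing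
    -- and strictly convex, κ'(0) = 0, κ'(h) → ∞ as h → 1⁻
    (κ κ' : ℝ → ℝ)
    (hκcont : ContinuousOn κ (Icc 0 1))
    (hκ' : ∀ h ∈ Ico (0:ℝ) 1, HasDerivWithinAt κ (κ' h) (Icc 0 1) h)
    (hκ'cont : ContinuousOn κ' (Ico 0 1))
    (hκmono : StrictMonoOn κ (Icc 0 1))
    (hκconv : StrictConvexOn ℝ (Icc 0 1) κ)
    (hκ'0 : κ' 0 = 0)
    (hκ'top : Tendsto κ' (nhdsWithin 1 (Iio 1)) atTop)
    -- the evaluator's valuation vE with partial derivative vEa in effort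
    (vE vEa : ℝ → ℝ → ℝ)
    (hvEa : ∀ β ∈ Ici (0:ℝ), ∀ a ∈ Ici (0:ℝ),
      HasDerivWithinAt (fun x => vE x β) (vEa a β) (Ici 0) a)
    (hvEacont : ContinuousOn (fun p : ℝ × ℝ => vEa p.1 p.2) (Ici (0:ℝ) ×ˢ Ici (0:ℝ)))
    (hvEcont : ContinuousOn (fun p : ℝ × ℝ => vE p.1 p.2) (Ici (0:ℝ) ×ˢ Ici (0:ℝ)))
    (hvEmono1 : ∀ β ∈ Ici (0:ℝ), StrictMonoOn (fun a => vE a β) (Ici 0))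
    (hvEmono2 : ∀ a ∈ Ici (0:ℝ), StrictMonoOn (fun β => vE a β) (Ici 0))
    (hvEconc : ∀ β ∈ Ici (0:ℝ), ConcaveOn ℝ (Ici 0) (fun a => vE a β))
    (hvEa0 : ∀ β > (0:ℝ), 0 < vEa 0 β) :
    ∀ β ∈ Ici (0:ℝ),
      -- the problem max_{h ∈ [0,1]} vE(A(h,β),β) − κ(h) admits a maximizer
      (∃ h ∈ Icc (0:ℝ) 1, IsMaxOn (fun h' => vE (A h' β) β - κ h') (Icc 0 1) h) ∧
      -- if β = 0, then h = 0 is the unique maximizer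
      (β = 0 →
        IsMaxOn (fun h' => vE (A h' β) β - κ h') (Icc 0 1) 0 ∧
        ∀ h ∈ Icc (0:ℝ) 1, IsMaxOn (fun h' => vE (A h' β) β - κ h') (Icc 0 1) h → h = 0) ∧
      -- if β > 0, every maximizer lies in (0,1)
      (0 < β → ∀ h ∈ Icc (0:ℝ) 1,
        IsMaxOn (fun h' => vE (A h' β) β - κ h') (Icc 0 1) h → h ∈ Ioo (0:ℝ) 1) := by
  -- basic facts about the cost function
  have hc'cont : ContinuousOn c' (Ici 0) := fun x hx => (hc'' x hx).continuousWithinAt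
  have hccont : ContinuousOn c (Ici 0) := fun x hx => (hc' x hx).continuousWithinAt
  have hc'mono : StrictMonoOn c' (Ici 0) := by
    apply strictMonoOn_of_deriv_pos (convex_Ici 0) hc'cont
    intro x hx
    rw [interior_Ici] at hx
    rw [((hc'' x (mem_Ici.mpr hx.le)).hasDerivAt (Ici_mem_nhds hx)).deriv]
    exact hc''pos x (mem_Ici.mpr hx.le)
  have hc'nonneg : ∀ a : ℝ, 0 ≤ a → 0 ≤ c' a := by
    intro a ha
    rcases eq_or_lt_of_le ha with h | h
    · rw [← h, hc'0]
    · rw [← hc'0]; exact (hc'mono self_mem_Ici h.le h).le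
  have hc'pos : ∀ a : ℝ, 0 < a → 0 < c' a := by
    intro a ha; rw [← hc'0]; exact hc'mono self_mem_Ici ha.le ha
  have hcmono : MonotoneOn c (Ici 0) := by
    apply monotoneOn_of_deriv_nonneg (convex_Ici 0) hccont
    · intro x hx; rw [interior_Ici] at hx
      exact ((hc' x (mem_Ici.mpr hx.le)).hasDerivAt (Ici_mem_nhds hx)).differentiableAt.differentiableWithinAt
    · intro x hx; rw [interior_Ici] at hx
      rw [((hc' x (mem_Ici.mpr hx.le)).hasDerivAt (Ici_mem_nhds hx)).deriv]
      exact hc'nonneg x hx.le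
  intro β hβ
  -- if the objective degenerates to -c, the unique maximizer is 0
  have hA00 : ∀ h : ℝ, h ∈ Icc (0:ℝ) 1 → (∀ x : ℝ, 0 ≤ x → h * r x β = 0) → A h β = 0 := by
    intro h hh hzero
    obtain ⟨-, -, huniq⟩ := hA h hh β hβ
    refine (huniq 0 self_mem_Ici ?_).symm
    rw [isMaxOn_iff]
    intro x hx
    show h * r x β - c x ≤ h * r 0 β - c 0
    rw [hzero x hx, hzero 0 le_rfl]
    have := hcmono self_mem_Ici hx hx
    linarith
  rcases eq_or_lt_of_le (mem_Ici.mp hβ) with hb0 | hbpos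
  · -- case β = 0
    subst hb0
    have hAh0 : ∀ h ∈ Icc (0:ℝ) 1, A h 0 = 0 := by
      intro h hh
      apply hA00 h hh
      intro x hx
      rw [hr0' x hx, mul_zero]
    have h0mem : (0:ℝ) ∈ Icc (0:ℝ) 1 := ⟨le_rfl, zero_le_one⟩
    have hmax0 : IsMaxOn (fun h' => vE (A h' 0) 0 - κ h') (Icc 0 1) 0 := by
      rw [isMaxOn_iff]
      intro x hx
      show vE (A x 0) 0 - κ x ≤ vE (A 0 0) 0 - κ 0
      rw [hAh0 x hx, hAh0 0 h0mem]
      have : κ 0 ≤ κ x := by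
        rcases eq_or_lt_of_le hx.1 with h | h
        · rw [h]
        · exact (hκmono h0mem hx h).le
      linarith
    refine ⟨⟨0, h0mem, hmax0⟩, fun _ => ⟨hmax0, ?_⟩, fun h => absurd h (lt_irrefl 0)⟩
    intro h hh hmaxh
    by_contra hne
    have hpos : 0 < h := lt_of_le_of_ne hh.1 (Ne.symm hne)
    have hle := isMaxOn_iff.mp hmaxh 0 h0mem
    have hle' : vE (A 0 0) 0 - κ 0 ≤ vE (A h 0) 0 - κ h := hle
    rw [hAh0 0 h0mem, hAh0 h hh] at hle'
    have := hκmono h0mem hh hpos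
    linarith
  · -- case 0 < β
    have hra0β := hra0 β hbpos
    have hvEa0β := hvEa0 β hbpos
    have hracont : ContinuousOn (fun a => ra a β) (Ici 0) :=
      fun x hx => (hraa β hβ x hx).continuousWithinAt
    have hψanti : ∀ h : ℝ, 0 ≤ h → StrictAntiOn (fun a => h * ra a β - c' a) (Ici 0) := by
      intro h hh
      apply strictAntiOn_of_deriv_neg (convex_Ici 0)
        ((continuousOn_const.mul hracont).sub hc'cont)
      intro x hx; rw [interior_Ici] at hx
      have hd : HasDerivAt (fun a => h * ra a β - c' a) (h * raa x β - c'' x) x :=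
        (((hraa β hβ x (mem_Ici.mpr hx.le)).const_mul h).sub (hc'' x (mem_Ici.mpr hx.le))).hasDerivAt (Ici_mem_nhds hx)
      rw [show deriv (((fun _ : ℝ => h) * fun a : ℝ => ra a β) - c') x = h * raa x β - c'' x from hd.deriv]
      have h1 := hraanp x (mem_Ici.mpr hx.le) β hβ
      have h2 := hc''pos x (mem_Ici.mpr hx.le)
      nlinarith
    have hraanti : AntitoneOn (fun a => ra a β) (Ici 0) := by
      apply antitoneOn_of_deriv_nonpos (convex_Ici 0) hracont
      · intro x hx; rw [interior_Ici] at hx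
        exact ((hraa β hβ x (mem_Ici.mpr hx.le)).hasDerivAt
          (Ici_mem_nhds hx)).differentiableAt.differentiableWithinAt
      · intro x hx; rw [interior_Ici] at hx
        rw [((hraa β hβ x (mem_Ici.mpr hx.le)).hasDerivAt (Ici_mem_nhds hx)).deriv]
        exact hraanp x (mem_Ici.mpr hx.le) β hβ
    have hA0β : A 0 β = 0 := by
      apply hA00 0 ⟨le_rfl, zero_le_one⟩
      intro x hx; rw [zero_mul]
    -- derivative of the agent's objective
    have hFd : ∀ h : ℝ, ∀ x ∈ Ici (0:ℝ),
        HasDerivWithinAt (fun y => h * r y β - c y) (h * ra x β - c' x) (Ici 0) x :=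
      fun h x hx => ((hra β hβ x hx).const_mul h).sub (hc' x hx)
    -- first-order condition
    have hfoc : ∀ h : ℝ, 0 < h → h ≤ 1 →
        0 < A h β ∧ h * ra (A h β) β - c' (A h β) = 0 := by
      intro h h0 h1
      obtain ⟨hmem, hmax, -⟩ := hA h ⟨h0.le, h1⟩ β hβ
      have hApos : 0 < A h β := by
        by_contra hcon
        have heq : A h β = 0 := le_antisymm (not_lt.mp hcon) hmem
        have hslope := hFd h 0 self_mem_Ici
        rw [hasDerivWithinAt_iff_tendsto_slope, Ici_sdiff_left] at hslope
        have hle : h * ra 0 β - c' 0 ≤ 0 := by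
          refine le_of_tendsto hslope ?_
          filter_upwards [self_mem_nhdsWithin] with x hx
          rw [slope_def_field]
          apply div_nonpos_of_nonpos_of_nonneg
          · have hmax' := isMaxOn_iff.mp hmax x (mem_Ici.mpr (le_of_lt (mem_Ioi.mp hx)))
            have hmax'' : h * r x β - c x ≤ h * r (A h β) β - c (A h β) := hmax'
            rw [heq] at hmax''
            linarith
          · simp only [sub_nonneg]; exact (le_of_lt (mem_Ioi.mp hx))
        rw [hc'0] at hle
        nlinarith
      refine ⟨hApos, ?_⟩
      have hd := (hFd h (A h β) hmem).hasDerivAt (Ici_mem_nhds hApos)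
      exact (hmax.isLocalMax (Ici_mem_nhds hApos)).hasDerivAt_eq_zero hd
    -- uniform upper bound a2 on the optimal effort
    obtain ⟨a2, ha2ge, ha2neg⟩ :
        ∃ a2 : ℝ, 1 ≤ a2 ∧ ∀ h : ℝ, 0 ≤ h → h ≤ 1 → h * ra a2 β - c' a2 < 0 := by
      have h1 : ∀ᶠ a in atTop, ra a β / c' a < 1 :=
        (hralim β hbpos).eventually_lt_const one_pos
      have h2 : ∀ᶠ a in atTop, 1 ≤ c' a := hc'top.eventually_ge_atTop 1
      have h3 : ∀ᶠ a in atTop, (1:ℝ) ≤ a := eventually_ge_atTop 1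
      obtain ⟨a2, ⟨hq, hcp⟩, hge⟩ := ((h1.and h2).and h3).exists
      have hcpos : 0 < c' a2 := lt_of_lt_of_le one_pos hcp
      have hra2 : ra a2 β < c' a2 := (div_lt_one hcpos).mp hq
      refine ⟨a2, hge, ?_⟩
      intro h h0 h1'
      rcases le_or_gt (ra a2 β) 0 with hr | hr
      · nlinarith
      · nlinarith
    have ha2pos : (0:ℝ) < a2 := lt_of_lt_of_le one_pos ha2ge
    have hAub : ∀ h : ℝ, 0 ≤ h → h ≤ 1 → A h β < a2 := by
      intro h h0 h1
      rcases eq_or_lt_of_le h0 with heq | hpos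
      · rw [← heq, hA0β]; exact ha2pos
      · obtain ⟨hap, hfe⟩ := hfoc h hpos h1
        by_contra hcon
        push_neg at hcon
        have hmono : h * ra (A h β) β - c' (A h β) ≤ h * ra a2 β - c' a2 :=
          (hψanti h h0).antitoneOn ha2pos.le hap.le hcon
        have := ha2neg h h0 h1
        linarith
    -- monotonicity of optimal effort in h
    have hAmono : ∀ h : ℝ, 0 < h → h ≤ 1 → A h β ≤ A 1 β := by
      intro h h0 h1
      rcases eq_or_lt_of_le h1 with heq | hlt
      · rw [heq]
      · obtain ⟨hap, hfe⟩ := hfoc h h0 h1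
        obtain ⟨ha1p, hf1⟩ := hfoc 1 one_pos le_rfl
        have hcpos := hc'pos _ hap
        have hrapos : 0 < ra (A h β) β := by nlinarith
        by_contra hcon
        push_neg at hcon
        have h2 : 1 * ra (A h β) β - c' (A h β) < 1 * ra (A 1 β) β - c' (A 1 β) :=
          hψanti 1 zero_le_one ha1p.le hap.le hcon
        nlinarith
    -- continuity of h ↦ A h β on [0,1]
    have hAcont : ContinuousOn (fun h => A h β) (Icc 0 1) := by
      intro h0 hh0
      rw [Metric.continuousWithinAt_iff]
      intro ε hε
      have ha0mem : (0:ℝ) ≤ A h0 β := (hA h0 hh0 β hβ).1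
      have hψa0 : h0 * ra (A h0 β) β - c' (A h0 β) ≤ 0 := by
        rcases eq_or_lt_of_le hh0.1 with heq | hpos
        · rw [← heq, hA0β, hc'0]; simp
        · exact le_of_eq (hfoc h0 hpos hh0.2).2
      have happos : (0:ℝ) ≤ A h0 β + ε/2 := by linarith
      have hψap : h0 * ra (A h0 β + ε/2) β - c' (A h0 β + ε/2) < 0 := by
        have hstep : h0 * ra (A h0 β + ε/2) β - c' (A h0 β + ε/2) <
            h0 * ra (A h0 β) β - c' (A h0 β) :=
          hψanti h0 hh0.1 ha0mem happos (by linarith)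
        linarith
      have hδ1pos : 0 < (c' (A h0 β + ε/2) - h0 * ra (A h0 β + ε/2) β) /
          (|ra (A h0 β + ε/2) β| + 1) := by
        apply div_pos (by linarith) (by positivity)
      have hupper : ∀ h : ℝ, 0 ≤ h → h ≤ 1 →
          |h - h0| < (c' (A h0 β + ε/2) - h0 * ra (A h0 β + ε/2) β) /
            (|ra (A h0 β + ε/2) β| + 1) → A h β < A h0 β + ε/2 := by
        intro h hge hle hnear
        have hψh : h * ra (A h0 β + ε/2) β - c' (A h0 β + ε/2) < 0 := by
          have e1 : (h - h0) * ra (A h0 β + ε/2) β ≤ |h - h0| * (|ra (A h0 β + ε/2) β| + 1) := by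
            calc (h - h0) * ra (A h0 β + ε/2) β ≤ |(h - h0) * ra (A h0 β + ε/2) β| :=
              le_abs_self _
            _ = |h - h0| * |ra (A h0 β + ε/2) β| := abs_mul _ _
            _ ≤ |h - h0| * (|ra (A h0 β + ε/2) β| + 1) := by
                nlinarith [abs_nonneg (h - h0)]
          have e2 : |h - h0| * (|ra (A h0 β + ε/2) β| + 1) <
              ((c' (A h0 β + ε/2) - h0 * ra (A h0 β + ε/2) β) /
                (|ra (A h0 β + ε/2) β| + 1)) * (|ra (A h0 β + ε/2) β| + 1) :=
            mul_lt_mul_of_pos_right hnear (by positivity)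
          have e3 : ((c' (A h0 β + ε/2) - h0 * ra (A h0 β + ε/2) β) /
              (|ra (A h0 β + ε/2) β| + 1)) * (|ra (A h0 β + ε/2) β| + 1) =
              c' (A h0 β + ε/2) - h0 * ra (A h0 β + ε/2) β := by
            field_simp
          nlinarith
        rcases eq_or_lt_of_le hge with heq | hpos
        · rw [← heq, hA0β]; linarith
        · obtain ⟨hpos', hfe⟩ := hfoc h hpos hle
          by_contra hcon
          push_neg at hcon
          have : h * ra (A h β) β - c' (A h β) ≤
              h * ra (A h0 β + ε/2) β - c' (A h0 β + ε/2) :=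
            (hψanti h hge).antitoneOn happos hpos'.le hcon
          linarith
      rcases lt_or_ge (A h0 β) ε with hcase | hcase
      · refine ⟨_, hδ1pos, ?_⟩
        intro h hh hdist
        rw [Real.dist_eq] at hdist
        have h1 := hupper h hh.1 hh.2 hdist
        have h2 : 0 ≤ A h β := (hA h hh β hβ).1
        show dist (A h β) (A h0 β) < ε
        rw [Real.dist_eq, abs_lt]
        constructor <;> linarith
      · have ha0pos : 0 < A h0 β := lt_of_lt_of_le hε hcase
        have hh0pos : 0 < h0 := by
          rcases eq_or_lt_of_le hh0.1 with heq | hpos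
          · exfalso; rw [← heq, hA0β] at ha0pos; exact lt_irrefl 0 ha0pos
          · exact hpos
        have hampos : 0 < A h0 β - ε/2 := by linarith
        have hψam : 0 < h0 * ra (A h0 β - ε/2) β - c' (A h0 β - ε/2) := by
          have hfe := (hfoc h0 hh0pos hh0.2).2
          have hstep : h0 * ra (A h0 β) β - c' (A h0 β) <
              h0 * ra (A h0 β - ε/2) β - c' (A h0 β - ε/2) :=
            hψanti h0 hh0.1 hampos.le ha0mem (by linarith)
          linarith
        have hδ2pos : 0 < (h0 * ra (A h0 β - ε/2) β - c' (A h0 β - ε/2)) /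
            (|ra (A h0 β - ε/2) β| + 1) :=
          div_pos hψam (by positivity)
        refine ⟨min ((c' (A h0 β + ε/2) - h0 * ra (A h0 β + ε/2) β) /
            (|ra (A h0 β + ε/2) β| + 1))
            ((h0 * ra (A h0 β - ε/2) β - c' (A h0 β - ε/2)) /
            (|ra (A h0 β - ε/2) β| + 1)), lt_min hδ1pos hδ2pos, ?_⟩
        intro h hh hdist
        rw [Real.dist_eq] at hdist
        have hd1 : |h - h0| < (c' (A h0 β + ε/2) - h0 * ra (A h0 β + ε/2) β) /
            (|ra (A h0 β + ε/2) β| + 1) := lt_of_lt_of_le hdist (min_le_left _ _)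
        have hd2 : |h - h0| < (h0 * ra (A h0 β - ε/2) β - c' (A h0 β - ε/2)) /
            (|ra (A h0 β - ε/2) β| + 1) := lt_of_lt_of_le hdist (min_le_right _ _)
        have hup := hupper h hh.1 hh.2 hd1
        have hψh : 0 < h * ra (A h0 β - ε/2) β - c' (A h0 β - ε/2) := by
          have e1 : -((h - h0) * ra (A h0 β - ε/2) β) ≤
              |h - h0| * (|ra (A h0 β - ε/2) β| + 1) := by
            calc -((h - h0) * ra (A h0 β - ε/2) β) ≤ |(h - h0) * ra (A h0 β - ε/2) β| := by
                  rw [abs_mul]; exact neg_le_of_neg_le (by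
                    rw [← abs_mul]; exact neg_abs_le _)
            _ = |h - h0| * |ra (A h0 β - ε/2) β| := abs_mul _ _
            _ ≤ |h - h0| * (|ra (A h0 β - ε/2) β| + 1) := by
                nlinarith [abs_nonneg (h - h0)]
          have e2 : |h - h0| * (|ra (A h0 β - ε/2) β| + 1) <
              ((h0 * ra (A h0 β - ε/2) β - c' (A h0 β - ε/2)) /
                (|ra (A h0 β - ε/2) β| + 1)) * (|ra (A h0 β - ε/2) β| + 1) :=
            mul_lt_mul_of_pos_right hd2 (by positivity)
          have e3 : ((h0 * ra (A h0 β - ε/2) β - c' (A h0 β - ε/2)) /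
              (|ra (A h0 β - ε/2) β| + 1)) * (|ra (A h0 β - ε/2) β| + 1) =
              h0 * ra (A h0 β - ε/2) β - c' (A h0 β - ε/2) := by
            field_simp
          nlinarith
        have hhpos : 0 < h := by
          rcases eq_or_lt_of_le hh.1 with heq | hp
          · exfalso
            rw [← heq] at hψh
            have := hc'pos _ hampos
            nlinarith
          · exact hp
        obtain ⟨hApos', hfe⟩ := hfoc h hhpos hh.2
        have hlow : A h0 β - ε/2 < A h β := by
          by_contra hcon
          push_neg at hcon
          have : h * ra (A h0 β - ε/2) β - c' (A h0 β - ε/2) ≤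
              h * ra (A h β) β - c' (A h β) :=
            (hψanti h hh.1).antitoneOn hApos'.le hampos.le hcon
          linarith
        show dist (A h β) (A h0 β) < ε
        rw [Real.dist_eq, abs_lt]
        constructor <;> linarith
    -- continuity of the evaluator's objective, existence of a maximizer
    have hAmemIci : ∀ h ∈ Icc (0:ℝ) 1, A h β ∈ Ici (0:ℝ) := fun h hh => (hA h hh β hβ).1
    have hvEAcont : ContinuousOn (fun h => vE (A h β) β) (Icc 0 1) := by
      have h1 : ContinuousOn (fun h : ℝ => ((A h β), β)) (Icc 0 1) :=
        hAcont.prodMk continuousOn_const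
      exact hvEcont.comp h1 (fun h hh => ⟨hAmemIci h hh, hβ⟩)
    have hfcont : ContinuousOn (fun h' => vE (A h' β) β - κ h') (Icc 0 1) :=
      hvEAcont.sub hκcont
    obtain ⟨hs, hsmem, hsmax⟩ :=
      isCompact_Icc.exists_isMaxOn (nonempty_Icc.mpr zero_le_one) hfcont
    -- continuity of a ↦ vEa a β and a ↦ vE a β on [0,∞)
    have hvEacont1 : ContinuousOn (fun a => vEa a β) (Ici 0) := by
      have h1 : ContinuousOn (fun a : ℝ => (a, β)) (Ici 0) :=
        continuousOn_id.prodMk continuousOn_const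
      exact hvEacont.comp h1 (fun a ha => ⟨ha, hβ⟩)
    have hvEcont1 : ContinuousOn (fun a => vE a β) (Ici 0) := by
      have h1 : ContinuousOn (fun a : ℝ => (a, β)) (Ici 0) :=
        continuousOn_id.prodMk continuousOn_const
      exact hvEcont.comp h1 (fun a ha => ⟨ha, hβ⟩)
    -- a small threshold a1 where ra and vEa stay above half their initial values
    obtain ⟨δa, hδapos, hballa⟩ :
        ∃ δa > (0:ℝ), ∀ x : ℝ, 0 ≤ x → x < δa → ra 0 β / 2 < ra x β ∧ vEa 0 β / 2 < vEa x β := by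
      have t1 : Tendsto (fun a => ra a β) (nhdsWithin 0 (Ici 0)) (nhds (ra 0 β)) :=
        hracont 0 self_mem_Ici
      have t2 : Tendsto (fun a => vEa a β) (nhdsWithin 0 (Ici 0)) (nhds (vEa 0 β)) :=
        hvEacont1 0 self_mem_Ici
      have hev : ∀ᶠ a in nhdsWithin (0:ℝ) (Ici 0),
          ra 0 β / 2 < ra a β ∧ vEa 0 β / 2 < vEa a β :=
        (t1.eventually_const_lt (by linarith)).and (t2.eventually_const_lt (by linarith))
      obtain ⟨δ, hδ, hsub⟩ := Metric.mem_nhdsWithin_iff.mp hev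
      refine ⟨δ, hδ, ?_⟩
      intro x hx hxδ
      exact hsub ⟨by rw [Metric.mem_ball, Real.dist_eq, sub_zero, abs_of_nonneg hx]; exact hxδ, hx⟩
    -- upper bound M on c'' near 0
    have ha1pos : 0 < δa / 2 := by linarith
    obtain ⟨xM, hxMmem, hxM⟩ :=
      isCompact_Icc.exists_isMaxOn (⟨0, le_rfl, ha1pos.le⟩ : (Icc (0:ℝ) (δa/2)).Nonempty)
        (hc''cont.mono (fun x hx => hx.1))
    have hMpos : 0 < c'' xM := hc''pos xM hxMmem.1
    -- threshold on h so that the optimal effort stays below δa/2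
    obtain ⟨δh, hδhpos, hAsmall⟩ :
        ∃ δh > (0:ℝ), ∀ x : ℝ, x ∈ Icc (0:ℝ) 1 → |x| < δh → A x β < δa / 2 := by
      have t := hAcont 0 (left_mem_Icc.mpr zero_le_one)
      have t' : Tendsto (fun h => A h β) (nhdsWithin 0 (Icc 0 1)) (nhds 0) := by
        have := t.tendsto
        rwa [hA0β] at this
      have hev : ∀ᶠ h in nhdsWithin (0:ℝ) (Icc 0 1), A h β < δa / 2 :=
        t'.eventually_lt_const ha1pos
      obtain ⟨δ, hδ, hsub⟩ := Metric.mem_nhdsWithin_iff.mp hev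
      refine ⟨δ, hδ, ?_⟩
      intro x hx hxδ
      exact hsub ⟨by rw [Metric.mem_ball, Real.dist_eq, sub_zero]; exact hxδ, hx⟩
    -- pick a small h1 > 0 beating h = 0
    have hε0pos : 0 < (vEa 0 β / 2) * (ra 0 β / 2) / c'' xM :=
      div_pos (mul_pos (by linarith) (by linarith)) hMpos
    have hκd0 := hκ' 0 ⟨le_rfl, zero_lt_one⟩
    rw [hasDerivWithinAt_iff_tendsto_slope, hκ'0] at hκd0
    have hNB1 : (nhdsWithin (0:ℝ) (Ioo 0 1)).NeBot :=
      mem_closure_iff_nhdsWithin_neBot.mp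
        (by rw [closure_Ioo (zero_ne_one)]; exact ⟨le_rfl, zero_le_one⟩)
    have hNB : (nhdsWithin (0:ℝ) (Icc 0 1 \ {0})).NeBot :=
      hNB1.mono (nhdsWithin_mono 0 (fun x hx => ⟨⟨hx.1.le, hx.2.le⟩, ne_of_gt hx.1⟩))
    have hslsm : ∀ᶠ x in nhdsWithin (0:ℝ) (Icc 0 1 \ {0}),
        slope κ 0 x < (vEa 0 β / 2) * (ra 0 β / 2) / c'' xM :=
      hκd0.eventually_lt_const hε0pos
    have hsm2 : ∀ᶠ x in nhdsWithin (0:ℝ) (Icc 0 1 \ {0}), |x| < min δh 1 := by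
      have hball2 : ∀ᶠ x in nhds (0:ℝ), |x| < min δh 1 := by
        have := Metric.ball_mem_nhds (0:ℝ) (lt_min hδhpos one_pos)
        filter_upwards [this] with x hx
        rw [Metric.mem_ball, Real.dist_eq, sub_zero] at hx
        exact hx
      exact hball2.filter_mono nhdsWithin_le_nhds
    obtain ⟨h1, hmem1, hsl1, hdist1⟩ :=
      (eventually_mem_nhdsWithin.and (hslsm.and hsm2)).exists
    have hh1pos : 0 < h1 := lt_of_le_of_ne hmem1.1.1 (Ne.symm hmem1.2)
    have hh1lt1 : h1 < 1 := lt_of_abs_lt (lt_of_lt_of_le hdist1 (min_le_right _ _))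
    have hAsm1 : A h1 β < δa / 2 :=
      hAsmall h1 hmem1.1 (lt_of_lt_of_le hdist1 (min_le_left _ _))
    obtain ⟨hA1pos', hfe1⟩ := hfoc h1 hh1pos hmem1.1.2
    -- MVT for c' on [0, A h1 β]
    obtain ⟨ξ, hξ, hξeq⟩ := exists_hasDerivAt_eq_slope c' c'' hA1pos'
      (hc'cont.mono (fun x hx => hx.1))
      (fun x hx => (hc'' x (mem_Ici.mpr hx.1.le)).hasDerivAt (Ici_mem_nhds hx.1))
    rw [hc'0, sub_zero, sub_zero] at hξeq
    have hξeq' : c' (A h1 β) = c'' ξ * A h1 β := by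
      rw [hξeq]; field_simp
    have hξM : c'' ξ ≤ c'' xM :=
      isMaxOn_iff.mp hxM ξ ⟨hξ.1.le, by linarith [hξ.2]⟩
    -- MVT for vE on [0, A h1 β]
    obtain ⟨ξ2, hξ2, hξ2eq⟩ := exists_hasDerivAt_eq_slope (fun a => vE a β) (fun a => vEa a β)
      hA1pos' (hvEcont1.mono (fun x hx => hx.1))
      (fun x hx => (hvEa β hβ x (mem_Ici.mpr hx.1.le)).hasDerivAt (Ici_mem_nhds hx.1))
    rw [sub_zero] at hξ2eq
    have hξ2eq' : vE (A h1 β) β - vE 0 β = vEa ξ2 β * A h1 β := by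
      rw [hξ2eq]; field_simp
    -- bounds near zero
    have hraA1 : ra 0 β / 2 < ra (A h1 β) β :=
      (hballa (A h1 β) hA1pos'.le (by linarith)).1
    have hvEaξ2 : vEa 0 β / 2 < vEa ξ2 β :=
      (hballa ξ2 hξ2.1.le (by linarith [hξ2.2])).2
    -- lower bound on A h1 β
    have hAlb : h1 * (ra 0 β / 2) ≤ c'' xM * A h1 β := by
      have e1 : h1 * ra (A h1 β) β = c' (A h1 β) := by linarith
      nlinarith
    -- gain at h1 over h = 0
    have hκsl : κ h1 - κ 0 < ((vEa 0 β / 2) * (ra 0 β / 2) / c'' xM) * h1 := by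
      have : slope κ 0 h1 = (κ h1 - κ 0) / (h1 - 0) := slope_def_field κ 0 h1
      rw [sub_zero] at this
      rw [this] at hsl1
      calc κ h1 - κ 0 = ((κ h1 - κ 0) / h1) * h1 := by field_simp
      _ < ((vEa 0 β / 2) * (ra 0 β / 2) / c'' xM) * h1 :=
          mul_lt_mul_of_pos_right hsl1 hh1pos
    have hlowgain : vE (A 0 β) β - κ 0 < vE (A h1 β) β - κ h1 := by
      rw [hA0β]
      have e1 : (vEa 0 β / 2) * (A h1 β) ≤ vEa ξ2 β * A h1 β :=
        mul_le_mul_of_nonneg_right hvEaξ2.le hA1pos'.le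
      have e2 : (vEa 0 β / 2) * (h1 * (ra 0 β / 2) / c'' xM) ≤ (vEa 0 β / 2) * (A h1 β) := by
        apply mul_le_mul_of_nonneg_left _ (by linarith)
        rw [div_le_iff₀ hMpos]
        nlinarith
      have e3 : (vEa 0 β / 2) * (h1 * (ra 0 β / 2) / c'' xM) =
          ((vEa 0 β / 2) * (ra 0 β / 2) / c'' xM) * h1 := by
        field_simp
      nlinarith
    -- the upper end: find h2 < 1 beating h = 1
    obtain ⟨hA1pos, hf1⟩ := hfoc 1 one_pos le_rfl
    obtain ⟨xm, hxmmem, hxm⟩ :=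
      isCompact_Icc.exists_isMinOn (⟨0, le_rfl, hA1pos.le⟩ : (Icc (0:ℝ) (A 1 β)).Nonempty)
        (hc''cont.mono (fun x hx => hx.1))
    obtain ⟨xD, hxDmem, hxD⟩ :=
      isCompact_Icc.exists_isMaxOn (⟨0, le_rfl, hA1pos.le⟩ : (Icc (0:ℝ) (A 1 β)).Nonempty)
        (hvEacont1.mono (fun x hx => hx.1))
    have hmpos : 0 < c'' xm := hc''pos xm hxmmem.1
    have hBnonneg : 0 ≤ max (vEa xD β) 0 * ra 0 β / c'' xm :=
      div_nonneg (mul_nonneg (le_max_right _ _) hra0β.le) hmpos.le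
    have hgap : ∀ h : ℝ, 0 < h → h < 1 →
        vE (A 1 β) β - vE (A h β) β ≤ (max (vEa xD β) 0 * ra 0 β / c'' xm) * (1 - h) := by
      intro h h0 h1'
      obtain ⟨hApos, hfe⟩ := hfoc h h0 h1'.le
      have hle := hAmono h h0 h1'.le
      rcases eq_or_lt_of_le hle with heq | hlt
      · rw [heq]
        have : 0 ≤ (max (vEa xD β) 0 * ra 0 β / c'' xm) * (1 - h) :=
          mul_nonneg hBnonneg (by linarith)
        linarith
      · obtain ⟨ζ, hζ, hζeq⟩ := exists_hasDerivAt_eq_slope c' c'' hlt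
          (hc'cont.mono (fun x hx => le_trans hApos.le hx.1))
          (fun x hx => (hc'' x (mem_Ici.mpr (le_trans hApos.le hx.1.le))).hasDerivAt
            (Ici_mem_nhds (lt_trans hApos hx.1)))
        rw [eq_div_iff (ne_of_gt (by linarith : (0:ℝ) < A 1 β - A h β))] at hζeq
        have hmζ : c'' xm ≤ c'' ζ :=
          isMinOn_iff.mp hxm ζ ⟨le_trans hApos.le hζ.1.le, hζ.2.le⟩
        have hra1le : ra (A 1 β) β ≤ ra (A h β) β := hraanti hApos.le hA1pos.le hle
        have hra0le : ra (A h β) β ≤ ra 0 β := hraanti self_mem_Ici hApos.le hApos.le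
        have hkey : c'' xm * (A 1 β - A h β) ≤ (1 - h) * ra 0 β := by
          have e1 : c'' xm * (A 1 β - A h β) ≤ c'' ζ * (A 1 β - A h β) :=
            mul_le_mul_of_nonneg_right hmζ (by linarith)
          nlinarith
        obtain ⟨ζ2, hζ2, hζ2eq⟩ := exists_hasDerivAt_eq_slope
          (fun a => vE a β) (fun a => vEa a β) hlt
          (hvEcont1.mono (fun x hx => le_trans hApos.le hx.1))
          (fun x hx => (hvEa β hβ x (mem_Ici.mpr (le_trans hApos.le hx.1.le))).hasDerivAt
            (Ici_mem_nhds (lt_trans hApos hx.1)))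
        rw [eq_div_iff (ne_of_gt (by linarith : (0:ℝ) < A 1 β - A h β))] at hζ2eq
        have hDζ : vEa ζ2 β ≤ max (vEa xD β) 0 :=
          le_trans (isMaxOn_iff.mp hxD ζ2 ⟨le_trans hApos.le hζ2.1.le, hζ2.2.le⟩)
            (le_max_left _ _)
        have e2 : vE (A 1 β) β - vE (A h β) β ≤ max (vEa xD β) 0 * (A 1 β - A h β) := by
          have := mul_le_mul_of_nonneg_right hDζ (by linarith : (0:ℝ) ≤ A 1 β - A h β)
          nlinarith
        have e3 : A 1 β - A h β ≤ (1 - h) * ra 0 β / c'' xm := by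
          rw [le_div_iff₀ hmpos]; nlinarith
        calc vE (A 1 β) β - vE (A h β) β ≤ max (vEa xD β) 0 * (A 1 β - A h β) := e2
        _ ≤ max (vEa xD β) 0 * ((1 - h) * ra 0 β / c'' xm) :=
            mul_le_mul_of_nonneg_left e3 (le_max_right _ _)
        _ = (max (vEa xD β) 0 * ra 0 β / c'' xm) * (1 - h) := by
            field_simp
    -- convexity bound for κ
    have hκbound : ∀ h : ℝ, 0 ≤ h → h < 1 → κ' h * (1 - h) ≤ κ 1 - κ h := by
      intro h h0 h1'
      have hd := hκ' h ⟨h0, h1'⟩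
      rw [hasDerivWithinAt_iff_tendsto_slope] at hd
      have hNBh : (nhdsWithin h (Icc (0:ℝ) 1 \ {h})).NeBot := by
        have hb : (nhdsWithin h (Ioo h 1)).NeBot :=
          mem_closure_iff_nhdsWithin_neBot.mp
            (by rw [closure_Ioo (ne_of_lt h1')]; exact ⟨le_rfl, h1'.le⟩)
        exact hb.mono (nhdsWithin_mono h
          (fun x hx => ⟨⟨h0.trans hx.1.le, hx.2.le⟩, ne_of_gt hx.1⟩))
      have hle : κ' h ≤ (κ 1 - κ h) / (1 - h) := by
        refine le_of_tendsto hd ?_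
        filter_upwards [self_mem_nhdsWithin] with x hx
        rw [slope_def_field]
        exact hκconv.convexOn.secant_mono ⟨h0, h1'.le⟩ hx.1
          (right_mem_Icc.mpr zero_le_one) hx.2 (ne_of_gt h1') hx.1.2
      calc κ' h * (1 - h) ≤ ((κ 1 - κ h) / (1 - h)) * (1 - h) :=
            mul_le_mul_of_nonneg_right hle (by linarith)
      _ = κ 1 - κ h := div_mul_cancel₀ _ (by intro hzero; rw [sub_eq_zero] at hzero; exact (ne_of_gt h1') hzero)
    -- choose h2 close to 1
    have hupev : ∀ᶠ x in nhdsWithin (1:ℝ) (Iio 1),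
        max (vEa xD β) 0 * ra 0 β / c'' xm < κ' x :=
      hκ'top.eventually_gt_atTop _
    have hupev2 : ∀ᶠ x in nhdsWithin (1:ℝ) (Iio 1), (0:ℝ) < x :=
      (eventually_gt_nhds one_pos).filter_mono nhdsWithin_le_nhds
    obtain ⟨h2, hmem2, hκ'B, h2pos⟩ :=
      (eventually_mem_nhdsWithin.and (hupev.and hupev2)).exists
    have hupgain : vE (A 1 β) β - κ 1 < vE (A h2 β) β - κ h2 := by
      have hg := hgap h2 h2pos hmem2
      have hk := hκbound h2 h2pos.le hmem2
      nlinarith [mul_pos (sub_pos.mpr hκ'B) (sub_pos.mpr (show h2 < 1 from hmem2))]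
    -- assemble the conclusion
    refine ⟨⟨hs, hsmem, hsmax⟩, fun heq => absurd heq (ne_of_gt hbpos), ?_⟩
    intro _ h hh hmax
    constructor
    · rcases eq_or_lt_of_le hh.1 with heq | hpos
      · exfalso
        have hcmp := isMaxOn_iff.mp hmax h1 hmem1.1
        have hcmp' : vE (A h1 β) β - κ h1 ≤ vE (A h β) β - κ h := hcmp
        rw [← heq] at hcmp'
        linarith
      · exact hpos
    · rcases eq_or_lt_of_le hh.2 with heq | hlt
      · exfalso
        have hcmp := isMaxOn_iff.mp hmax h2 ⟨h2pos.le, (le_of_lt hmem2)⟩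
        have hcmp' : vE (A h2 β) β - κ h2 ≤ vE (A h β) β - κ h := hcmp
        rw [heq] at hcmp'
        linarith
      · exact hlt
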